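/- If λ_i = σ_i² / (1 − (1 − η_i σ_i²)^t) − σ_i² (with 0 < η_i σ_i² < 1 and t ≥ 1), then for each i: σ_i²(θ*_i)²(λ_i/(σ_i² + λ_i))² = σ_i²(θ*_i)²(1 − η_i σ_i²)^{2t} and (σ²/n)σ_i²(σ_i/(σ_i² + λ_i))² = (σ²/n)σ_i²·(1 − (1−η_i σ_i²)^t)²/σ_i². Consequently the approximate Tikhonov-regularized risk σ² + Σ_i [σ_i²(θ*_i)²(λ_i/(σ_i²+λ_i))² + (σ²/n)σ_i⁴/(σ_i²+λ_i)²] equals the approximate early-stopping risk σ² + Σ_i [σ_i²(θ*_i)²(1−η_i σ_i²)^{2t} + (σ²/n)(1 − (1−η_i σ_i²)^t)²]. -/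

import Mathlib

/-- With `λ_i = σ_i²/(1 − (1 − η_i σ_i²)^t) − σ_i²` (where `0 < η_i σ_i² < 1`, `t ≥ 1`),
the bias and variance terms of the Tikhonov risk equal those of early-stopped gradient
descent, and hence the two approximate risks coincide. -/
theorem tikhonov_equals_early_stopping (d n t : ℕ) (ht : 1 ≤ t) (hn : 0 < n)
    (σi η θstar : Fin d → ℝ) (σ : ℝ) (hσi : ∀ i, 0 < σi i)
    (hη : ∀ i, 0 < η i * σi i ^ 2 ∧ η i * σi i ^ 2 < 1)
    (lam : Fin d → ℝ)
    (hlam : ∀ i, lam i = σi i ^ 2 / (1 - (1 - η i * σi i ^ 2) ^ t) - σi i ^ 2) :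
    (∀ i, σi i ^ 2 * θstar i ^ 2 * (lam i / (σi i ^ 2 + lam i)) ^ 2
        = σi i ^ 2 * θstar i ^ 2 * (1 - η i * σi i ^ 2) ^ (2 * t)) ∧
    (∀ i, (σ ^ 2 / n) * σi i ^ 2 * (σi i / (σi i ^ 2 + lam i)) ^ 2
        = (σ ^ 2 / n) * σi i ^ 2 * ((1 - (1 - η i * σi i ^ 2) ^ t) ^ 2 / σi i ^ 2)) ∧
    σ ^ 2 + ∑ i,
        (σi i ^ 2 * θstar i ^ 2 * (lam i / (σi i ^ 2 + lam i)) ^ 2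
          + (σ ^ 2 / n) * σi i ^ 4 / (σi i ^ 2 + lam i) ^ 2)
      = σ ^ 2 + ∑ i,
        (σi i ^ 2 * θstar i ^ 2 * (1 - η i * σi i ^ 2) ^ (2 * t)
          + (σ ^ 2 / n) * (1 - (1 - η i * σi i ^ 2) ^ t) ^ 2) := by
  have hfacts : ∀ i, (1 - η i * σi i ^ 2) ^ t < 1 ∧
      lam i / (σi i ^ 2 + lam i) = (1 - η i * σi i ^ 2) ^ t ∧
      σi i ^ 2 + lam i = σi i ^ 2 / (1 - (1 - η i * σi i ^ 2) ^ t) := by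
    intro i
    obtain ⟨h1, h2⟩ := hη i
    have ha : (0:ℝ) < σi i ^ 2 := pow_pos (hσi i) 2
    have hb0 : 0 ≤ 1 - η i * σi i ^ 2 := by linarith
    have hb1 : 1 - η i * σi i ^ 2 < 1 := by linarith
    have hr1 : (1 - η i * σi i ^ 2) ^ t < 1 :=
      pow_lt_one₀ hb0 hb1 (by omega)
    have hd : (0:ℝ) < 1 - (1 - η i * σi i ^ 2) ^ t := by linarith
    have hsum : σi i ^ 2 + lam i = σi i ^ 2 / (1 - (1 - η i * σi i ^ 2) ^ t) := by
      rw [hlam i]; ring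
    refine ⟨hr1, ?_, hsum⟩
    rw [hsum, hlam i]
    generalize (1 - η i * σi i ^ 2) ^ t = r at hd ⊢
    field_simp [hd.ne', (hσi i).ne']
    ring
  have hbias : ∀ i, σi i ^ 2 * θstar i ^ 2 * (lam i / (σi i ^ 2 + lam i)) ^ 2
      = σi i ^ 2 * θstar i ^ 2 * (1 - η i * σi i ^ 2) ^ (2 * t) := by
    intro i
    rw [(hfacts i).2.1, ← pow_mul, Nat.mul_comm]
  have hvar : ∀ i, (σ ^ 2 / n) * σi i ^ 2 * (σi i / (σi i ^ 2 + lam i)) ^ 2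
      = (σ ^ 2 / n) * σi i ^ 2 * ((1 - (1 - η i * σi i ^ 2) ^ t) ^ 2 / σi i ^ 2) := by
    intro i
    obtain ⟨hr1, _, hsum⟩ := hfacts i
    have ha : (σi i) ≠ 0 := ne_of_gt (hσi i)
    have hd : (1 - (1 - η i * σi i ^ 2) ^ t) ≠ 0 := by
      have := hr1; intro h; nlinarith
    rw [hsum]
    field_simp
  refine ⟨hbias, hvar, ?_⟩
  congr 1
  apply Finset.sum_congr rfl
  intro i _
  have h2 := hvar i
  obtain ⟨hr1, _, hsum⟩ := hfacts i
  have ha : (σi i) ≠ 0 := ne_of_gt (hσi i)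
  have hterm : (σ ^ 2 / n) * σi i ^ 4 / (σi i ^ 2 + lam i) ^ 2
      = (σ ^ 2 / n) * (1 - (1 - η i * σi i ^ 2) ^ t) ^ 2 := by
    have hd : (1 - (1 - η i * σi i ^ 2) ^ t) ≠ 0 := by intro h; nlinarith
    rw [hsum]
    field_simp
  rw [hbias i, hterm]
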